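/- Let p ≥ 1, let n_0, ..., n_{p−1} be natural numbers with each n_i > 1, let t_0, ..., t_{p−1} and x be positive rational numbers, let n be the least common multiple of the n_i, let d_{i,j} be the greatest common divisor of n_i and n_j for i ≠ j, let c_0, ..., c_{p−1} be integers satisfying Σ_{i<p} c_i·(n/n_i) = 1, and set β = Π_{i<p} t_i^{c_i·(n/n_i)} (integer exponents). Then: x·t_i is an n_i-th power for every i < p, if and only if, x·β is an n-th power and t_i·t_j^{−1} is a d_{i,j}-th power for all i ≠ j. -/

import Mathlib

private lemma zpow_sum_aux {ι : Type*} {a : ℚ} (ha : a ≠ 0) (s : Finset ι) (f : ι → ℤ) :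
    a ^ (∑ i ∈ s, f i) = ∏ i ∈ s, a ^ f i := by
  classical
  induction s using Finset.induction with
  | empty => simp
  | insert _ _ h ih => rw [Finset.sum_insert h, Finset.prod_insert h, zpow_add₀ ha, ih]

/-- Lemma on simultaneous power conditions for positive rationals. -/
theorem pow_conditions_iff (p : ℕ) (hp : 1 ≤ p) (n : Fin p → ℕ) (hn : ∀ i, 1 < n i)
    (t : Fin p → ℚ) (ht : ∀ i, 0 < t i) (x : ℚ) (hx : 0 < x)
    (N : ℕ) (hN : N = Finset.univ.lcm n)
    (c : Fin p → ℤ) (hc : ∑ i, c i * ((N / n i : ℕ) : ℤ) = 1)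
    (β : ℚ) (hβ : β = ∏ i, t i ^ (c i * ((N / n i : ℕ) : ℤ))) :
    (∀ i, ∃ y : ℚ, x * t i = y ^ n i) ↔
      ((∃ y : ℚ, x * β = y ^ N) ∧
        ∀ i j, i ≠ j → ∃ y : ℚ, t i * (t j)⁻¹ = y ^ Nat.gcd (n i) (n j)) := by
  have hNdvd : ∀ i, n i ∣ N := fun i => hN ▸ Finset.dvd_lcm (Finset.mem_univ i)
  have hnpos : ∀ i, 0 < n i := fun i => lt_trans one_pos (hn i)
  have hne : ∀ i, t i ≠ 0 := fun i => (ht i).ne'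
  have hxne : x ≠ 0 := hx.ne'
  have hβpos : 0 < β := by
    rw [hβ]
    exact Finset.prod_pos fun i _ => zpow_pos (ht i) _
  have hβne : β ≠ 0 := hβpos.ne'
  -- key divisibility: n i ∣ gcd(n i, n j) * (N / n j)
  have hkey : ∀ i j : Fin p, (n i : ℤ) ∣ (Nat.gcd (n i) (n j) : ℤ) * ((N / n j : ℕ) : ℤ) := by
    intro i j
    have h1 : Nat.lcm (n i) (n j) ∣ N := Nat.lcm_dvd (hNdvd i) (hNdvd j)
    have h2 : n i * n j ∣ Nat.gcd (n i) (n j) * N := by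
      obtain ⟨m, hm⟩ := h1
      exact ⟨m, by rw [hm, ← mul_assoc, Nat.gcd_mul_lcm]⟩
    have h3 : n i ∣ Nat.gcd (n i) (n j) * (N / n j) := by
      rw [← Nat.mul_div_assoc _ (hNdvd j),
        Nat.dvd_div_iff_mul_dvd (dvd_mul_of_dvd_right (hNdvd j) _)]
      exact (mul_comm (n i) (n j)) ▸ h2
    exact_mod_cast Int.natCast_dvd_natCast.mpr h3
  have hNi : ∀ i, (n i : ℤ) * ((N / n i : ℕ) : ℤ) = (N : ℤ) := by
    intro i; exact_mod_cast congrArg Nat.cast (Nat.mul_div_cancel' (hNdvd i))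
  -- abs trick
  have habs : ∀ (a : ℚ) (m : ℕ), 0 < a → (∃ y : ℚ, a = y ^ m) → ∃ y : ℚ, 0 < y ∧ a = y ^ m := by
    rintro a m ha ⟨y, hy⟩
    rcases m.eq_zero_or_pos with h0 | hm
    · subst h0; exact ⟨1, one_pos, by simpa using hy⟩
    · have hy0 : y ≠ 0 := by
        rintro rfl; rw [zero_pow hm.ne'] at hy; exact ha.ne' hy
      exact ⟨|y|, abs_pos.mpr hy0, by rw [← abs_pow, ← hy, abs_of_pos ha]⟩
  constructor
  · intro h
    choose y₀ hy₀ using h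
    have h' := fun i => habs _ _ (mul_pos hx (ht i)) ⟨y₀ i, hy₀ i⟩
    choose y hy1 hy2 using h'
    have hyne : ∀ i, y i ≠ 0 := fun i => (hy1 i).ne'
    constructor
    · refine ⟨∏ i, y i ^ c i, ?_⟩
      have : x * β = (∏ i, y i ^ c i) ^ (N : ℤ) := by
        calc x * β = (∏ i, x ^ (c i * ((N / n i : ℕ) : ℤ)))
              * ∏ i, t i ^ (c i * ((N / n i : ℕ) : ℤ)) := by
              rw [hβ, ← zpow_sum_aux hxne, hc, zpow_one]
          _ = ∏ i, (x * t i) ^ (c i * ((N / n i : ℕ) : ℤ)) := by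
              rw [← Finset.prod_mul_distrib]
              exact Finset.prod_congr rfl fun i _ => (mul_zpow _ _ _).symm
          _ = ∏ i, (y i ^ c i) ^ (N : ℤ) := by
              refine Finset.prod_congr rfl fun i _ => ?_
              rw [hy2 i, ← zpow_natCast (y i) (n i), ← zpow_mul, ← zpow_mul]
              congr 1
              calc (n i : ℤ) * (c i * ((N / n i : ℕ) : ℤ))
                  = c i * ((n i : ℤ) * ((N / n i : ℕ) : ℤ)) := by ring
                _ = c i * (N : ℤ) := by rw [hNi i]
          _ = (∏ i, y i ^ c i) ^ (N : ℤ) := Finset.prod_zpow _ _ _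
      rw [this, zpow_natCast]
    · intro i j hij
      refine ⟨y i ^ ((n i / Nat.gcd (n i) (n j) : ℕ) : ℤ)
        * (y j ^ ((n j / Nat.gcd (n i) (n j) : ℕ) : ℤ))⁻¹, ?_⟩
      have hdi : (Nat.gcd (n i) (n j) : ℤ) * ((n i / Nat.gcd (n i) (n j) : ℕ) : ℤ) = (n i : ℤ) := by
        exact_mod_cast congrArg Nat.cast (Nat.mul_div_cancel' (Nat.gcd_dvd_left (n i) (n j)))
      have hdj : (Nat.gcd (n i) (n j) : ℤ) * ((n j / Nat.gcd (n i) (n j) : ℕ) : ℤ) = (n j : ℤ) := by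
        exact_mod_cast congrArg Nat.cast (Nat.mul_div_cancel' (Nat.gcd_dvd_right (n i) (n j)))
      symm
      calc (y i ^ ((n i / Nat.gcd (n i) (n j) : ℕ) : ℤ)
            * (y j ^ ((n j / Nat.gcd (n i) (n j) : ℕ) : ℤ))⁻¹) ^ Nat.gcd (n i) (n j)
          = (y i ^ ((n i / Nat.gcd (n i) (n j) : ℕ) : ℤ)) ^ (Nat.gcd (n i) (n j) : ℤ)
            * ((y j ^ ((n j / Nat.gcd (n i) (n j) : ℕ) : ℤ)) ^ (Nat.gcd (n i) (n j) : ℤ))⁻¹ := by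
            rw [← zpow_natCast _ (Nat.gcd (n i) (n j)), mul_zpow, inv_zpow]
        _ = y i ^ (n i : ℤ) * (y j ^ (n j : ℤ))⁻¹ := by
            rw [← zpow_mul, ← zpow_mul, mul_comm ((n i / Nat.gcd (n i) (n j) : ℕ) : ℤ),
              mul_comm ((n j / Nat.gcd (n i) (n j) : ℕ) : ℤ), hdi, hdj]
        _ = (x * t i) * (x * t j)⁻¹ := by rw [zpow_natCast, zpow_natCast, hy2 i, hy2 j]
        _ = t i * (t j)⁻¹ := by
            rw [mul_inv, show x * t i * (x⁻¹ * (t j)⁻¹) = x * x⁻¹ * (t i * (t j)⁻¹) from by ring,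
              mul_inv_cancel₀ hxne, one_mul]
  · rintro ⟨hxβ, h2⟩ i
    obtain ⟨y, hy0, hy⟩ := habs _ _ (mul_pos hx hβpos) hxβ
    have hyne : y ≠ 0 := hy0.ne'
    have hz : ∀ j, ∃ z : ℚ, 0 < z ∧ t i * (t j)⁻¹ = z ^ Nat.gcd (n i) (n j) := by
      intro j
      by_cases hij : i = j
      · subst hij; exact ⟨1, one_pos, by rw [mul_inv_cancel₀ (hne i), one_pow]⟩
      · exact habs _ _ (mul_pos (ht i) (inv_pos.mpr (ht j))) (h2 i j hij)
    choose z hz0 hz using hz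
    have hzne : ∀ j, z j ≠ 0 := fun j => (hz0 j).ne'
    choose k hk using fun j => hkey i j
    refine ⟨y ^ ((N / n i : ℕ) : ℤ) * ∏ j, z j ^ (c j * k j), ?_⟩
    calc x * t i = (x * β) * (t i * β⁻¹) := by
          rw [show x * β * (t i * β⁻¹) = β * β⁻¹ * (x * t i) from by ring,
            mul_inv_cancel₀ hβne, one_mul]
      _ = y ^ N * ∏ j, (t i * (t j)⁻¹) ^ (c j * ((N / n j : ℕ) : ℤ)) := by
          rw [← hy]; congr 1
          calc t i * β⁻¹
              = (∏ j, t i ^ (c j * ((N / n j : ℕ) : ℤ)))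
                * (∏ j, t j ^ (c j * ((N / n j : ℕ) : ℤ)))⁻¹ := by
                rw [← zpow_sum_aux (hne i), hc, zpow_one, hβ]
            _ = ∏ j, (t i ^ (c j * ((N / n j : ℕ) : ℤ))
                * (t j ^ (c j * ((N / n j : ℕ) : ℤ)))⁻¹) := by
                rw [← Finset.prod_inv_distrib, ← Finset.prod_mul_distrib]
            _ = ∏ j, (t i * (t j)⁻¹) ^ (c j * ((N / n j : ℕ) : ℤ)) := by
                refine Finset.prod_congr rfl fun j _ => ?_
                rw [mul_zpow, inv_zpow]
      _ = (y ^ ((N / n i : ℕ) : ℤ)) ^ (n i : ℤ)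
            * ∏ j, (z j ^ (c j * k j)) ^ (n i : ℤ) := by
          congr 1
          · rw [← zpow_mul, mul_comm ((N / n i : ℕ) : ℤ), hNi i, zpow_natCast]
          · refine Finset.prod_congr rfl fun j _ => ?_
            rw [hz j, ← zpow_natCast (z j) (Nat.gcd (n i) (n j)), ← zpow_mul, ← zpow_mul]
            congr 1
            calc (Nat.gcd (n i) (n j) : ℤ) * (c j * ((N / n j : ℕ) : ℤ))
                = c j * ((Nat.gcd (n i) (n j) : ℤ) * ((N / n j : ℕ) : ℤ)) := by ring
              _ = c j * ((n i : ℤ) * k j) := by rw [hk j]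
              _ = c j * k j * (n i : ℤ) := by ring
      _ = (y ^ ((N / n i : ℕ) : ℤ) * ∏ j, z j ^ (c j * k j)) ^ n i := by
          rw [Finset.prod_zpow, ← mul_zpow, zpow_natCast]
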